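/- For all integers k and l, the operators on the fermionic Fock space 𝓕 satisfy the Clifford anti-commutation relation ψ(k)∘ψ*(l) + ψ*(l)∘ψ(k) = δ_{k,l}·id_𝓕, i.e. this sum of compositions is the identity map when k = l and the zero map when k ≠ l. -/

import Mathlib

open scoped Classical

/-- A semi-infinite monomial: a strictly decreasing sequence `i : ℕ → ℤ`
(written `i₀ > i₁ > i₂ > ⋯`) such that `i n = m - n` for all sufficiently
large `n`, for some integer `m` (the charge). -/
structure SIM : Type where
  seq : ℕ → ℤ
  strictAnti : StrictAnti seq
  charge_exists : ∃ m : ℤ, ∃ N : ℕ, ∀ n ≥ N, seq n = m - n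

namespace SIM

/-- `v` has charge `m` if `v n = m - n` for all sufficiently large `n`. -/
def HasCharge (v : SIM) (m : ℤ) : Prop :=
  ∃ N : ℕ, ∀ n ≥ N, v.seq n = m - n

/-- The charge of a semi-infinite monomial. -/
noncomputable def charge (v : SIM) : ℤ := v.charge_exists.choose

theorem exists_seq_lt (v : SIM) (k : ℤ) : ∃ n, v.seq n < k := by
  obtain ⟨m, N, hN⟩ := v.charge_exists
  refine ⟨max N (m - k + 1).toNat, ?_⟩
  rw [hN _ (le_max_left _ _)]
  have h1 : (m - k + 1).toNat ≤ max N (m - k + 1).toNat := le_max_right _ _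
  omega

/-- The position at which `k` is inserted into `v`: the number of entries of `v`
that are greater than `k` (assuming `k` does not occur in `v`). -/
noncomputable def insIdx (v : SIM) (k : ℤ) : ℕ := sInf {n : ℕ | v.seq n < k}

/-- The monomial obtained from `v` by inserting the entry `k`
(meaningful when `k` does not occur among the entries of `v`; in the unused
case where `k` does occur we simply return `v`). -/
noncomputable def insert (v : SIM) (k : ℤ) : SIM :=
  if h : k ∈ Set.range v.seq then v
  else
    { seq := fun n =>
        if n < v.insIdx k then v.seq n else if n = v.insIdx k then k else v.seq (n - 1)
      strictAnti := by
        have hs : v.seq (v.insIdx k) < k := Nat.sInf_mem (v.exists_seq_lt k)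
        have hgt : ∀ n, n < v.insIdx k → k < v.seq n := by
          intro n hn
          have h1 : ¬ v.seq n < k := Nat.notMem_of_lt_sInf hn
          have h2 : v.seq n ≠ k := fun hh => h ⟨n, hh⟩
          omega
        apply strictAnti_nat_of_succ_lt
        intro n

        rcases lt_trichotomy (n + 1) (v.insIdx k) with h1 | h1 | h1
        · rw [if_pos h1, if_pos (by omega)]
          exact v.strictAnti (Nat.lt_succ_self n)
        · rw [if_neg (by omega), if_pos h1, if_pos (by omega)]
          exact hgt n (by omega)
        · rw [if_neg (by omega), if_neg (by omega)]
          rcases eq_or_lt_of_le (Nat.le_of_lt_succ h1) with h2 | h2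
          · rw [if_neg (by omega), if_pos h2.symm]
            simpa [← h2] using hs
          · rw [if_neg (by omega), if_neg (by omega)]
            exact v.strictAnti (by omega)
      charge_exists := by
        obtain ⟨m, N, hN⟩ := v.charge_exists
        refine ⟨m + 1, max N (v.insIdx k) + 1, fun n hn => ?_⟩

        beta_reduce
        rw [if_neg (by omega), if_neg (by omega), hN (n - 1) (by omega)]
        omega }

/-- The position of the entry `k` in `v` (assuming `k` occurs in `v`). -/
noncomputable def delIdx (v : SIM) (k : ℤ) : ℕ := sInf {n : ℕ | v.seq n ≤ k}

/-- The monomial obtained from `v` by deleting the entry `k`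
(meaningful when `k` occurs among the entries of `v`). -/
noncomputable def delete (v : SIM) (k : ℤ) : SIM where
  seq n := if n < v.delIdx k then v.seq n else v.seq (n + 1)
  strictAnti := by
    apply strictAnti_nat_of_succ_lt
    intro n

    split_ifs <;> exact v.strictAnti (by omega)
  charge_exists := by
    obtain ⟨m, N, hN⟩ := v.charge_exists
    refine ⟨m - 1, max N (v.delIdx k), fun n hn => ?_⟩

    beta_reduce
    rw [if_neg (by omega), hN (n + 1) (by omega)]
    omega

end SIM

/-- The fermionic Fock space: the free ℂ-vector space on the set of all
semi-infinite monomials (of all charges). -/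
abbrev Fock : Type := SIM →₀ ℂ

/-- The wedging operator `ψ(k)`: it sends a basis monomial `i₀ > i₁ > ⋯` to `0`
if `k = i_s` for some `s`, and otherwise to `(−1)^s` times the basis monomial
obtained by inserting `k`, where `s` is the number of entries greater
than `k`. -/
noncomputable def psi (k : ℤ) : Fock →ₗ[ℂ] Fock :=
  Finsupp.lsum ℂ fun v =>
    if k ∈ Set.range v.seq then 0
    else ((-1 : ℂ) ^ v.insIdx k) • Finsupp.lsingle (v.insert k)

/-- The contracting operator `ψ*(k)`: it sends a basis monomial `i₀ > i₁ > ⋯`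
to `(−1)^s` times the basis monomial obtained by deleting `i_s` if `k = i_s`,
and to `0` if `k` does not occur among the entries. -/
noncomputable def psiStar (k : ℤ) : Fock →ₗ[ℂ] Fock :=
  Finsupp.lsum ℂ fun v =>
    if k ∈ Set.range v.seq then ((-1 : ℂ) ^ v.delIdx k) • Finsupp.lsingle (v.delete k)
    else 0


/-! ### Auxiliary lemmas -/

lemma Nat.sInf_eq_of_mem_of_forall {S : Set ℕ} {n0 : ℕ} (h0 : n0 ∈ S)
    (h1 : ∀ m < n0, m ∉ S) : sInf S = n0 :=
  le_antisymm (Nat.sInf_le h0) (le_of_not_gt fun h => h1 _ h (Nat.sInf_mem ⟨n0, h0⟩))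

namespace SIM

lemma ext' {v w : SIM} (h : v.seq = w.seq) : v = w := by
  cases v; cases w; simpa using h

variable {v : SIM} {k l : ℤ}

lemma seq_lt_iff (v : SIM) (k : ℤ) (n : ℕ) : v.seq n < k ↔ v.insIdx k ≤ n := by
  constructor
  · intro h; exact Nat.sInf_le h
  · intro h
    have h1 : v.seq (v.insIdx k) < k := Nat.sInf_mem (v.exists_seq_lt k)
    have h2 : v.seq n ≤ v.seq (v.insIdx k) := v.strictAnti.antitone h
    omega

lemma lt_seq_iff (hk : k ∉ Set.range v.seq) (n : ℕ) :
    k < v.seq n ↔ n < v.insIdx k := by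
  have h1 := v.seq_lt_iff k n
  have h2 : v.seq n ≠ k := fun h => hk ⟨n, h⟩
  omega

lemma seq_le_iff (hk : k ∈ Set.range v.seq) (n : ℕ) :
    v.seq n ≤ k ↔ v.delIdx k ≤ n := by
  obtain ⟨m, hm⟩ := hk
  have hne : {n : ℕ | v.seq n ≤ k}.Nonempty := ⟨m, le_of_eq hm⟩
  constructor
  · intro h; exact Nat.sInf_le h
  · intro h
    have h1 : v.seq (v.delIdx k) ≤ k := Nat.sInf_mem hne
    have h2 : v.seq n ≤ v.seq (v.delIdx k) := v.strictAnti.antitone h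
    omega

lemma seq_delIdx (hk : k ∈ Set.range v.seq) : v.seq (v.delIdx k) = k := by
  obtain ⟨m, hm⟩ := hk
  have h1 : v.seq (v.delIdx k) ≤ k := (seq_le_iff ⟨m, hm⟩ _).2 le_rfl
  have h2 : v.delIdx k ≤ m := (seq_le_iff ⟨m, hm⟩ _).1 (le_of_eq hm)
  have h3 : v.seq m ≤ v.seq (v.delIdx k) := v.strictAnti.antitone h2
  omega

lemma insert_seq (hk : k ∉ Set.range v.seq) (n : ℕ) :
    (v.insert k).seq n =
      if n < v.insIdx k then v.seq n else if n = v.insIdx k then k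
      else v.seq (n - 1) := by
  rw [SIM.insert, dif_neg hk]

lemma delete_seq (v : SIM) (k : ℤ) (n : ℕ) :
    (v.delete k).seq n = if n < v.delIdx k then v.seq n else v.seq (n + 1) := rfl

lemma range_insert (hk : k ∉ Set.range v.seq) :
    Set.range (v.insert k).seq = Set.range v.seq ∪ {k} := by
  ext x
  simp only [Set.mem_range, Set.mem_union, Set.mem_singleton_iff, or_comm]
  constructor
  · rintro ⟨n, rfl⟩
    rw [insert_seq hk]
    split_ifs with h1 h2
    · exact Or.inr ⟨n, rfl⟩
    · exact Or.inl rfl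
    · exact Or.inr ⟨n - 1, rfl⟩
  · rintro (h | ⟨n, rfl⟩)
    · refine ⟨v.insIdx k, ?_⟩
      rw [insert_seq hk, if_neg (lt_irrefl _), if_pos rfl, h]
    · by_cases h : n < v.insIdx k
      · exact ⟨n, by rw [insert_seq hk, if_pos h]⟩
      · refine ⟨n + 1, ?_⟩
        rw [insert_seq hk, if_neg (by omega), if_neg (by omega)]
        simp
lemma range_delete (hk : k ∈ Set.range v.seq) :
    Set.range (v.delete k).seq = Set.range v.seq \ {k} := by
  have hd := seq_delIdx hk
  ext x
  simp only [Set.mem_range, Set.mem_diff, Set.mem_singleton_iff]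
  constructor
  · rintro ⟨n, rfl⟩
    rw [delete_seq]
    split_ifs with h1
    · refine ⟨⟨n, rfl⟩, ?_⟩
      have := v.strictAnti h1
      omega
    · refine ⟨⟨n + 1, rfl⟩, ?_⟩
      have : v.seq (n + 1) < v.seq (v.delIdx k) := v.strictAnti (by omega)
      omega
  · rintro ⟨⟨n, rfl⟩, hne⟩
    have hnd : n ≠ v.delIdx k := fun h => hne (by rw [h, hd])
    by_cases h : n < v.delIdx k
    · exact ⟨n, by rw [delete_seq, if_pos h]⟩
    · refine ⟨n - 1, ?_⟩
      rw [delete_seq, if_neg (by omega)]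
      congr 1
      omega

lemma not_mem_range_delete (hk : k ∈ Set.range v.seq) :
    k ∉ Set.range (v.delete k).seq := by
  rw [range_delete hk]; simp

lemma delIdx_insert_self (hk : k ∉ Set.range v.seq) :
    (v.insert k).delIdx k = v.insIdx k := by
  apply Nat.sInf_eq_of_mem_of_forall
  · show (v.insert k).seq (v.insIdx k) ≤ k
    rw [insert_seq hk, if_neg (lt_irrefl _), if_pos rfl]
  · intro m hm
    show ¬ (v.insert k).seq m ≤ k
    rw [insert_seq hk, if_pos hm]
    have := (lt_seq_iff hk m).2 hm
    omega

lemma delete_insert (hk : k ∉ Set.range v.seq) : (v.insert k).delete k = v := by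
  apply ext'
  funext n
  rw [delete_seq, delIdx_insert_self hk, insert_seq hk, insert_seq hk]
  split_ifs with h1 h2 h3 <;>
    first | rfl | (exfalso; omega) | (congr 1; omega)

lemma insIdx_delete_self (hk : k ∈ Set.range v.seq) :
    (v.delete k).insIdx k = v.delIdx k := by
  have hd := seq_delIdx hk
  apply Nat.sInf_eq_of_mem_of_forall
  · show (v.delete k).seq (v.delIdx k) < k
    rw [delete_seq, if_neg (lt_irrefl _)]
    have : v.seq (v.delIdx k + 1) < v.seq (v.delIdx k) :=
      v.strictAnti (by omega)
    omega
  · intro m hm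
    show ¬ (v.delete k).seq m < k
    rw [delete_seq, if_pos hm]
    have := v.strictAnti hm
    omega

lemma insert_delete (hk : k ∈ Set.range v.seq) : (v.delete k).insert k = v := by
  have hd := seq_delIdx hk
  have hkd := not_mem_range_delete hk
  apply ext'
  funext n
  rw [insert_seq hkd, insIdx_delete_self hk, delete_seq, delete_seq]
  split_ifs with h1 h2 h3 <;>
    first | rfl | (rw [h2, hd]) | (exfalso; omega) | (congr 1; omega)
section Mixed

variable (hk : k ∉ Set.range v.seq) (hl : l ∈ Set.range v.seq)
include hk hl

omit hk in
lemma insIdx_le_delIdx (hkl : l < k) : v.insIdx k ≤ v.delIdx l :=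
  (seq_lt_iff v k _).1 (by rw [seq_delIdx hl]; exact hkl)

lemma delIdx_lt_insIdx (hkl : k < l) : v.delIdx l < v.insIdx k :=
  (lt_seq_iff hk _).1 (by rw [seq_delIdx hl]; exact hkl)

lemma delIdx_insert_gt (hkl : l < k) :
    (v.insert k).delIdx l = v.delIdx l + 1 := by
  have hsd := insIdx_le_delIdx hl hkl
  apply Nat.sInf_eq_of_mem_of_forall
  · show (v.insert k).seq (v.delIdx l + 1) ≤ l
    rw [insert_seq hk, if_neg (by omega), if_neg (by omega)]
    simp only [Nat.add_sub_cancel]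
    rw [seq_delIdx hl]
  · intro m hm
    show ¬ (v.insert k).seq m ≤ l
    rw [insert_seq hk]
    split_ifs with h1 h2
    · have := (lt_seq_iff hk m).2 h1
      omega
    · omega
    · have := (seq_le_iff hl (m - 1)).symm
      omega

lemma insIdx_delete_gt (hkl : l < k) :
    (v.delete l).insIdx k = v.insIdx k := by
  have hsd := insIdx_le_delIdx hl hkl
  apply Nat.sInf_eq_of_mem_of_forall
  · show (v.delete l).seq (v.insIdx k) < k
    rw [delete_seq]
    split_ifs with h1
    · exact (seq_lt_iff v k _).2 le_rfl
    · exact (seq_lt_iff v k _).2 (by omega)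
  · intro m hm
    show ¬ (v.delete l).seq m < k
    rw [delete_seq, if_pos (by omega)]
    have := (lt_seq_iff hk m).2 hm
    omega

lemma comm_gt (hkl : l < k) :
    (v.insert k).delete l = (v.delete l).insert k := by
  have hsd := insIdx_le_delIdx hl hkl
  have hk' : k ∉ Set.range (v.delete l).seq := by
    rw [range_delete hl]
    exact fun h => hk h.1
  apply ext'
  funext n
  rw [delete_seq, delIdx_insert_gt hk hl hkl, insert_seq hk, insert_seq hk,
    insert_seq hk', insIdx_delete_gt hk hl hkl, delete_seq, delete_seq]
  split_ifs <;> first | rfl | (exfalso; omega) | (congr 1; omega)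

lemma delIdx_insert_lt (hkl : k < l) :
    (v.insert k).delIdx l = v.delIdx l := by
  have hds := delIdx_lt_insIdx hk hl hkl
  apply Nat.sInf_eq_of_mem_of_forall
  · show (v.insert k).seq (v.delIdx l) ≤ l
    rw [insert_seq hk, if_pos hds, seq_delIdx hl]
  · intro m hm
    show ¬ (v.insert k).seq m ≤ l
    rw [insert_seq hk, if_pos (by omega)]
    have := (seq_le_iff hl m).symm
    omega

lemma insIdx_delete_lt (hkl : k < l) :
    (v.delete l).insIdx k = v.insIdx k - 1 := by
  have hds := delIdx_lt_insIdx hk hl hkl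
  apply Nat.sInf_eq_of_mem_of_forall
  · show (v.delete l).seq (v.insIdx k - 1) < k
    rw [delete_seq, if_neg (by omega)]
    have h : v.insIdx k - 1 + 1 = v.insIdx k := by omega
    rw [h]
    exact (seq_lt_iff v k _).2 le_rfl
  · intro m hm
    show ¬ (v.delete l).seq m < k
    rw [delete_seq]
    split_ifs with h1
    · have := (seq_lt_iff v k m).symm
      omega
    · have := (seq_lt_iff v k (m + 1)).symm
      omega

lemma comm_lt (hkl : k < l) :
    (v.insert k).delete l = (v.delete l).insert k := by
  have hds := delIdx_lt_insIdx hk hl hkl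
  have hk' : k ∉ Set.range (v.delete l).seq := by
    rw [range_delete hl]
    exact fun h => hk h.1
  apply ext'
  funext n
  rw [delete_seq, delIdx_insert_lt hk hl hkl, insert_seq hk, insert_seq hk,
    insert_seq hk', insIdx_delete_lt hk hl hkl, delete_seq, delete_seq]
  split_ifs <;> first | rfl | (exfalso; omega) | (congr 1; omega)

end Mixed

end SIM

lemma psi_single_of_mem {k : ℤ} {v : SIM} (h : k ∈ Set.range v.seq) (b : ℂ) :
    psi k (Finsupp.single v b) = 0 := by
  rw [psi, Finsupp.lsum_single, if_pos h, LinearMap.zero_apply]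

lemma psi_single_of_not_mem {k : ℤ} {v : SIM} (h : k ∉ Set.range v.seq) (b : ℂ) :
    psi k (Finsupp.single v b) =
      ((-1 : ℂ) ^ v.insIdx k) • Finsupp.single (v.insert k) b := by
  rw [psi, Finsupp.lsum_single, if_neg h, LinearMap.smul_apply, Finsupp.lsingle_apply]

lemma psiStar_single_of_mem {k : ℤ} {v : SIM} (h : k ∈ Set.range v.seq) (b : ℂ) :
    psiStar k (Finsupp.single v b) =
      ((-1 : ℂ) ^ v.delIdx k) • Finsupp.single (v.delete k) b := by
  rw [psiStar, Finsupp.lsum_single, if_pos h, LinearMap.smul_apply, Finsupp.lsingle_apply]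

lemma psiStar_single_of_not_mem {k : ℤ} {v : SIM} (h : k ∉ Set.range v.seq) (b : ℂ) :
    psiStar k (Finsupp.single v b) = 0 := by
  rw [psiStar, Finsupp.lsum_single, if_neg h, LinearMap.zero_apply]

/-- For all integers `k` and `l`, the operators on the fermionic Fock space `𝓕`
satisfy the Clifford anti-commutation relation
`ψ(k)∘ψ*(l) + ψ*(l)∘ψ(k) = δ_{k,l}·id`. -/
theorem psi_psiStar_anticomm (k l : ℤ) :
    psi k ∘ₗ psiStar l + psiStar l ∘ₗ psi k =
      if k = l then (LinearMap.id : Fock →ₗ[ℂ] Fock) else 0 := by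
  apply Finsupp.lhom_ext
  intro v b
  rw [LinearMap.add_apply, LinearMap.comp_apply, LinearMap.comp_apply]
  by_cases hk : k ∈ Set.range v.seq <;> by_cases hl : l ∈ Set.range v.seq
  · -- both occur
    rw [psi_single_of_mem hk, psiStar_single_of_mem hl, map_zero, map_smul]
    by_cases hkl : k = l
    · subst hkl
      rw [psi_single_of_not_mem (SIM.not_mem_range_delete hk),
        SIM.insIdx_delete_self hk, SIM.insert_delete hk, if_pos rfl,
        LinearMap.id_apply, smul_smul, ← pow_add, Even.neg_one_pow ⟨_, rfl⟩,
        one_smul, add_zero]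
    · rw [psi_single_of_mem (by rw [SIM.range_delete hl]; exact ⟨hk, hkl⟩),
        smul_zero, add_zero, if_neg hkl, LinearMap.zero_apply]
  · -- k occurs, l does not
    have hkl : k ≠ l := fun h => hl (h ▸ hk)
    rw [psi_single_of_mem hk, psiStar_single_of_not_mem hl, map_zero, map_zero,
      add_zero, if_neg hkl, LinearMap.zero_apply]
  · -- l occurs, k does not
    have hkl : k ≠ l := fun h => hk (h ▸ hl)
    rw [psi_single_of_not_mem hk, psiStar_single_of_mem hl, map_smul, map_smul]
    have hk' : k ∉ Set.range (v.delete l).seq := by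
      rw [SIM.range_delete hl]; exact fun h => hk h.1
    have hl' : l ∈ Set.range (v.insert k).seq := by
      rw [SIM.range_insert hk]; exact Or.inl hl
    rw [psi_single_of_not_mem hk', psiStar_single_of_mem hl', if_neg hkl,
      LinearMap.zero_apply, smul_smul, smul_smul, ← pow_add, ← pow_add]
    rcases lt_or_gt_of_ne hkl with h | h
    · -- k < l
      rw [SIM.comm_lt hk hl h, SIM.insIdx_delete_lt hk hl h,
        SIM.delIdx_insert_lt hk hl h, ← add_smul]
      have hds := SIM.delIdx_lt_insIdx hk hl h
      have hcoeff : (-1 : ℂ) ^ (v.delIdx l + (v.insIdx k - 1)) +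
          (-1 : ℂ) ^ (v.insIdx k + v.delIdx l) = 0 := by
        have h1 : v.insIdx k + v.delIdx l = (v.delIdx l + (v.insIdx k - 1)) + 1 := by
          omega
        rw [h1, pow_succ]
        ring
      rw [hcoeff, zero_smul]
    · -- l < k
      rw [SIM.comm_gt hk hl h, SIM.insIdx_delete_gt hk hl h,
        SIM.delIdx_insert_gt hk hl h, ← add_smul]
      have hcoeff : (-1 : ℂ) ^ (v.delIdx l + v.insIdx k) +
          (-1 : ℂ) ^ (v.insIdx k + (v.delIdx l + 1)) = 0 := by
        have h1 : v.insIdx k + (v.delIdx l + 1) = (v.delIdx l + v.insIdx k) + 1 := by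
          omega
        rw [h1, pow_succ]
        ring
      rw [hcoeff, zero_smul]
  · -- neither occurs
    rw [psiStar_single_of_not_mem hl, map_zero, psi_single_of_not_mem hk,
      map_smul, zero_add]
    by_cases hkl : k = l
    · subst hkl
      have hk' : k ∈ Set.range (v.insert k).seq := by
        rw [SIM.range_insert hk]; exact Or.inr rfl
      rw [psiStar_single_of_mem hk', SIM.delIdx_insert_self hk,
        SIM.delete_insert hk, if_pos rfl, LinearMap.id_apply, smul_smul,
        ← pow_add, Even.neg_one_pow ⟨_, rfl⟩, one_smul]
    · have hl' : l ∉ Set.range (v.insert k).seq := by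
        rw [SIM.range_insert hk]
        rintro (h | h)
        · exact hl h
        · exact hkl (h.symm ▸ rfl)
      rw [psiStar_single_of_not_mem hl', smul_zero, if_neg hkl,
        LinearMap.zero_apply]
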